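/- For any natural numbers $\ell_1, \ell_2 \ge 0$, the discrete uniform random variables $\mathrm{Unif}\{0,\ldots,\ell_1\}$, $\mathrm{Unif}\{0,\ldots,\ell_2\}$, and $\mathrm{Unif}\{0,\ldots,\ell_1+\ell_2\}$ are jointly mixable: there is a coupling $(X_1,X_2,X_3)$ of these three laws with $X_1 + X_2 + X_3 = \ell_1 + \ell_2$ almost surely. -/

import Mathlib

open MeasureTheory
open scoped ENNReal

open Finset Nat in
private lemma aux_choose (a i : ℕ) :
    (a+1) * a.choose i * (a+2).choose (i+1) = (a+2) * (a+1).choose i * (a+1).choose (i+1) := by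
  have h1 := Nat.add_one_mul_choose_eq a i
  have h2 := Nat.add_one_mul_choose_eq (a+1) i
  calc (a+1) * a.choose i * (a+2).choose (i+1)
      = ((a+1) * a.choose i) * (a+2).choose (i+1) := by ring
    _ = ((a+1).choose (i+1) * (i+1)) * (a+2).choose (i+1) := by rw [h1]
    _ = ((a+2) * (a+1).choose i) * (a+1).choose (i+1) := by rw [h2]; ring
    _ = (a+2) * (a+1).choose i * (a+1).choose (i+1) := by ring

open Finset Nat in
private lemma pascal_sum (b : ℕ) (t : ℕ → ℕ) :
    ∑ j ∈ range (b+2), (b+1).choose j * t j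
      = ∑ j ∈ range (b+1), b.choose j * t j + ∑ j ∈ range (b+1), b.choose j * t (j+1) := by
  have h0 : ∑ j ∈ range (b+2), b.choose j * t j = ∑ j ∈ range (b+1), b.choose j * t j := by
    rw [Finset.sum_range_succ, Nat.choose_succ_self, zero_mul, add_zero]
  have h1 : ∑ j ∈ range (b+2), (b+1).choose j * t j
      = (∑ j ∈ range (b+1), (b.choose j * t (j+1) + b.choose (j+1) * t (j+1)))
        + (b+1).choose 0 * t 0 := by
    rw [Finset.sum_range_succ']
    congr 1
    refine Finset.sum_congr rfl fun j _ => ?_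
    rw [Nat.choose_succ_succ, add_mul]
  have h2 : ∑ j ∈ range (b+2), b.choose j * t j
      = (∑ j ∈ range (b+1), b.choose (j+1) * t (j+1)) + b.choose 0 * t 0 :=
    Finset.sum_range_succ' _ _
  rw [Finset.sum_add_distrib] at h1
  simp only [Nat.choose_zero_right, one_mul] at h1 h2
  omega

open Finset Nat in
private lemma key_identity : ∀ b a i : ℕ, i ≤ a →
    (a+1) * a.choose i * ∑ j ∈ range (b+1), b.choose j * ((i+j)! * (a+b-i-j)!) = (a+b+1)! := by
  intro b
  induction b with
  | zero =>
    intro a i h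
    have hc := Nat.choose_mul_factorial_mul_factorial h
    simp only [Nat.zero_add, Finset.sum_range_one, Nat.choose_zero_right, one_mul,
      Nat.add_zero, Nat.sub_zero]
    calc (a+1) * a.choose i * ((i)! * (a-i)!)
        = (a+1) * (a.choose i * (i)! * (a-i)!) := by ring
      _ = (a+1) * a ! := by rw [hc]
      _ = (a+1)! := (Nat.factorial_succ a).symm
  | succ b ih =>
    intro a i h
    have hps := pascal_sum b (fun j => (i+j)! * (a+(b+1)-i-j)!)
    rw [hps]
    have hS1 : ∑ j ∈ range (b+1), b.choose j * ((i+j)! * (a+(b+1)-i-j)!)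
        = ∑ j ∈ range (b+1), b.choose j * ((i+j)! * ((a+1)+b-i-j)!) := by
      refine Finset.sum_congr rfl fun j _ => ?_
      rw [show a+(b+1)-i-j = (a+1)+b-i-j from by omega]
    have hS2 : ∑ j ∈ range (b+1), b.choose j * ((i+(j+1))! * (a+(b+1)-i-(j+1))!)
        = ∑ j ∈ range (b+1), b.choose j * (((i+1)+j)! * ((a+1)+b-(i+1)-j)!) := by
      refine Finset.sum_congr rfl fun j _ => ?_
      rw [show i+(j+1) = (i+1)+j from by omega, show a+(b+1)-i-(j+1) = (a+1)+b-(i+1)-j from by omega]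
    rw [hS1, hS2]
    set H1 := ∑ j ∈ range (b+1), b.choose j * ((i+j)! * ((a+1)+b-i-j)!) with hH1
    set H2 := ∑ j ∈ range (b+1), b.choose j * (((i+1)+j)! * ((a+1)+b-(i+1)-j)!) with hH2
    have ih1 := ih (a+1) i (le_trans h (Nat.le_succ a))
    have ih2 := ih (a+1) (i+1) (by omega)
    rw [← hH1] at ih1
    rw [← hH2] at ih2
    have hRHS : (a+(b+1)+1)! = ((a+1)+b+1)! := by rw [show a+(b+1)+1 = (a+1)+b+1 from by omega]
    rw [hRHS]
    set F := ((a+1)+b+1)! with hF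
    have hpos : 0 < (a+2) * (a+1).choose i * (a+1).choose (i+1) := by
      have c1 : 0 < (a+1).choose i := Nat.choose_pos (by omega)
      have c2 : 0 < (a+1).choose (i+1) := Nat.choose_pos (by omega)
      positivity
    apply Nat.eq_of_mul_eq_mul_left hpos
    calc (a+2) * (a+1).choose i * (a+1).choose (i+1) * ((a+1) * a.choose i * (H1 + H2))
        = (a+1) * a.choose i *
            ((a+1).choose (i+1) * ((a+2) * (a+1).choose i * H1)
              + (a+1).choose i * ((a+2) * (a+1).choose (i+1) * H2)) := by ring
      _ = (a+1) * a.choose i * ((a+1).choose (i+1) * F + (a+1).choose i * F) := by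
          rw [ih1, ih2]
      _ = (a+1) * a.choose i * ((a+1).choose i + (a+1).choose (i+1)) * F := by ring
      _ = (a+1) * a.choose i * (a+2).choose (i+1) * F := by rw [← Nat.choose_succ_succ]
      _ = (a+2) * (a+1).choose i * (a+1).choose (i+1) * F := by rw [aux_choose]

open Finset Nat in
private lemma vand_grid (a b s : ℕ) :
    ∑ p ∈ Finset.range (a+1) ×ˢ Finset.range (b+1),
      (if p.1 + p.2 = s then a.choose p.1 * b.choose p.2 else 0) = (a+b).choose s := by
  classical
  have h1 : ∑ p ∈ Finset.range (a+1) ×ˢ Finset.range (b+1),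
      (if p.1 + p.2 = s then a.choose p.1 * b.choose p.2 else 0)
      = ∑ p ∈ Finset.range (a+s+1) ×ˢ Finset.range (b+s+1),
        (if p.1 + p.2 = s then a.choose p.1 * b.choose p.2 else 0) := by
    refine Finset.sum_subset ?_ ?_
    · intro p hp
      simp only [Finset.mem_product, Finset.mem_range] at hp ⊢
      omega
    · intro p hpT hp
      simp only [Finset.mem_product, Finset.mem_range, not_and_or, not_lt] at hp
      rcases hp with h | h
      · rw [Nat.choose_eq_zero_of_lt (by omega : a < p.1), zero_mul, ite_self]
      · rw [Nat.choose_eq_zero_of_lt (by omega : b < p.2), mul_zero, ite_self]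
  have h2 : ∑ p ∈ Finset.HasAntidiagonal.antidiagonal s, a.choose p.1 * b.choose p.2
      = ∑ p ∈ Finset.range (a+s+1) ×ˢ Finset.range (b+s+1),
        (if p.1 + p.2 = s then a.choose p.1 * b.choose p.2 else 0) := by
    rw [show ∑ p ∈ Finset.HasAntidiagonal.antidiagonal s, a.choose p.1 * b.choose p.2
        = ∑ p ∈ Finset.HasAntidiagonal.antidiagonal s,
            (if p.1 + p.2 = s then a.choose p.1 * b.choose p.2 else 0) from
      Finset.sum_congr rfl fun p hp => by
        rw [if_pos (Finset.HasAntidiagonal.mem_antidiagonal.mp hp)]]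
    refine Finset.sum_subset ?_ ?_
    · intro p hp
      have := Finset.HasAntidiagonal.mem_antidiagonal.mp hp
      simp only [Finset.mem_product, Finset.mem_range]
      omega
    · intro p hpT hp
      rw [if_neg (fun hc => hp (Finset.HasAntidiagonal.mem_antidiagonal.mpr hc))]
  rw [h1, ← h2, Nat.add_choose_eq]

/-- The uniform distribution on `{0, 1, ..., ℓ}` as a measure on `ℕ`. -/
noncomputable def discUnif (ℓ : ℕ) : Measure ℕ :=
  (PMF.uniformOfFinset (Finset.range (ℓ + 1)) ⟨0, by simp⟩).toMeasure

open Nat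

theorem stmt_12 (ℓ₁ ℓ₂ : ℕ) :
    ∃ π : Measure (ℕ × ℕ × ℕ), IsProbabilityMeasure π ∧
      π.map (fun x => x.1) = discUnif ℓ₁ ∧
      π.map (fun x => x.2.1) = discUnif ℓ₂ ∧
      π.map (fun x => x.2.2) = discUnif (ℓ₁ + ℓ₂) ∧
      (∀ᵐ x ∂π, x.1 + x.2.1 + x.2.2 = ℓ₁ + ℓ₂) := by
  classical
  set n : ℕ × ℕ → ℕ := fun p =>
    ℓ₁.choose p.1 * (ℓ₂.choose p.2 * ((p.1+p.2)! * (ℓ₁ + ℓ₂ - p.1 - p.2)!)) with hn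
  set G : Finset (ℕ × ℕ) := Finset.range (ℓ₁+1) ×ˢ Finset.range (ℓ₂+1) with hG
  set w : ℕ × ℕ → ℝ≥0∞ := fun p => (n p : ℝ≥0∞) / (((ℓ₁+ℓ₂+1)! : ℕ) : ℝ≥0∞) with hw
  set π : Measure (ℕ × ℕ × ℕ) :=
    ∑ p ∈ G, w p • Measure.dirac (p.1, p.2, ℓ₁ + ℓ₂ - p.1 - p.2) with hπ
  -- row sums
  have row : ∀ i, i ≤ ℓ₁ →
      (ℓ₁+1) * ∑ j ∈ Finset.range (ℓ₂+1), n (i, j) = (ℓ₁+ℓ₂+1)! := by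
    intro i hi
    have hk := key_identity ℓ₂ ℓ₁ i hi
    have hs : ∑ j ∈ Finset.range (ℓ₂+1), n (i, j)
        = ℓ₁.choose i * ∑ j ∈ Finset.range (ℓ₂+1),
            ℓ₂.choose j * ((i+j)! * (ℓ₁+ℓ₂-i-j)!) := by
      rw [Finset.mul_sum]
    rw [hs, ← mul_assoc]
    exact hk
  -- column sums
  have col : ∀ j, j ≤ ℓ₂ →
      (ℓ₂+1) * ∑ i ∈ Finset.range (ℓ₁+1), n (i, j) = (ℓ₁+ℓ₂+1)! := by
    intro j hj
    have hk := key_identity ℓ₁ ℓ₂ j hj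
    have hconv : ∑ i ∈ Finset.range (ℓ₁+1), ℓ₁.choose i * ((j+i)! * (ℓ₂+ℓ₁-j-i)!)
        = ∑ i ∈ Finset.range (ℓ₁+1), ℓ₁.choose i * ((i+j)! * (ℓ₁+ℓ₂-i-j)!) :=
      Finset.sum_congr rfl fun i _ => by
        rw [Nat.add_comm j i, show ℓ₂+ℓ₁-j-i = ℓ₁+ℓ₂-i-j from by omega]
    rw [hconv, show ℓ₂+ℓ₁+1 = ℓ₁+ℓ₂+1 from by omega] at hk
    have hs : ∑ i ∈ Finset.range (ℓ₁+1), n (i, j)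
        = ℓ₂.choose j * ∑ i ∈ Finset.range (ℓ₁+1), ℓ₁.choose i * ((i+j)! * (ℓ₁+ℓ₂-i-j)!) := by
      simp only [hn]
      rw [Finset.mul_sum]
      exact Finset.sum_congr rfl fun i _ => by ring
    rw [hs, ← mul_assoc]
    exact hk
  -- total sum
  have tot : ∑ p ∈ G, n p = (ℓ₁+ℓ₂+1)! := by
    apply Nat.eq_of_mul_eq_mul_left (show 0 < ℓ₁+1 by omega)
    rw [hG, Finset.sum_product, Finset.mul_sum]
    calc ∑ i ∈ Finset.range (ℓ₁+1), (ℓ₁+1) * ∑ j ∈ Finset.range (ℓ₂+1), n (i, j)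
        = ∑ i ∈ Finset.range (ℓ₁+1), (ℓ₁+ℓ₂+1)! :=
          Finset.sum_congr rfl fun i hi => row i (by
            simpa [Nat.lt_succ_iff] using Finset.mem_range.mp hi)
      _ = (ℓ₁+1) * (ℓ₁+ℓ₂+1)! := by
          rw [Finset.sum_const, Finset.card_range, smul_eq_mul]
  -- generic cast-sum helper
  have hD0 : (((ℓ₁+ℓ₂+1)! : ℕ) : ℝ≥0∞) ≠ 0 :=
    Nat.cast_ne_zero.mpr (Nat.factorial_ne_zero _)
  have sumw : ∀ {α : Type} (s : Finset α) (f : α → ℕ),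
      (∑ p ∈ s, ((f p : ℝ≥0∞) / (((ℓ₁+ℓ₂+1)! : ℕ) : ℝ≥0∞)))
        = ((∑ p ∈ s, f p : ℕ) : ℝ≥0∞) / (((ℓ₁+ℓ₂+1)! : ℕ) : ℝ≥0∞) := by
    intro α s f
    simp only [div_eq_mul_inv, Nat.cast_sum, Finset.sum_mul]
  -- fraction evaluation helper
  have frac : ∀ (S k : ℕ), S ≠ 0 → k * S = (ℓ₁+ℓ₂+1)! →
      ((S : ℕ) : ℝ≥0∞) / (((ℓ₁+ℓ₂+1)! : ℕ) : ℝ≥0∞) = (((k : ℕ)) : ℝ≥0∞)⁻¹ := by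
    intro S k hS hk
    rw [← hk]
    push_cast
    rw [show ((S : ℝ≥0∞)) / ((k : ℝ≥0∞) * (S : ℝ≥0∞)) = (1 * (S : ℝ≥0∞)) / ((k : ℝ≥0∞) * (S : ℝ≥0∞))
        from by rw [one_mul],
      ENNReal.mul_div_mul_right 1 (k : ℝ≥0∞) (by exact_mod_cast hS) (by simp), one_div]
  -- application of π to sets
  have hπ_apply : ∀ A : Set (ℕ × ℕ × ℕ), π A
      = ∑ p ∈ G, w p * (if ((p.1, p.2, ℓ₁ + ℓ₂ - p.1 - p.2) : ℕ × ℕ × ℕ) ∈ A then 1 else 0) := by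
    intro A
    have hA : MeasurableSet A := A.to_countable.measurableSet
    rw [hπ, Measure.finset_sum_apply]
    refine Finset.sum_congr rfl fun p _ => ?_
    rw [Measure.smul_apply, Measure.dirac_apply' _ hA, smul_eq_mul]
    by_cases h : ((p.1, p.2, ℓ₁ + ℓ₂ - p.1 - p.2) : ℕ × ℕ × ℕ) ∈ A
    · simp [Set.indicator_of_mem, h]
    · simp [Set.indicator_of_notMem, h]
  -- values of discUnif on singletons
  have hdisc : ∀ (ℓ x : ℕ), discUnif ℓ {x}
      = if x ∈ Finset.range (ℓ+1) then (((ℓ+1 : ℕ)) : ℝ≥0∞)⁻¹ else 0 := by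
    intro ℓ x
    rw [discUnif, PMF.toMeasure_apply_singleton _ _ (measurableSet_singleton x)]
    erw [PMF.uniformOfFinset_apply]
    simp
  -- probability
  have huniv : π Set.univ = 1 := by
    rw [hπ_apply]
    simp only [Set.mem_univ, if_true, mul_one]
    rw [show (∑ p ∈ G, w p) = ∑ p ∈ G, ((n p : ℝ≥0∞) / (((ℓ₁+ℓ₂+1)! : ℕ) : ℝ≥0∞)) from rfl,
      sumw, tot]
    exact ENNReal.div_self hD0 (by simp)
  -- first marginal
  have m1 : π.map (fun x => x.1) = discUnif ℓ₁ := by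
    apply MeasureTheory.Measure.ext_of_singleton
    intro x
    rw [Measure.map_apply measurable_fst (measurableSet_singleton x), hπ_apply]
    simp only [Set.mem_preimage, Set.mem_singleton_iff]
    rw [hG, Finset.sum_product]
    have step1 : ∀ i : ℕ, (∑ j ∈ Finset.range (ℓ₂+1), w (i, j) * (if i = x then 1 else 0))
        = if i = x then (∑ j ∈ Finset.range (ℓ₂+1), w (i, j)) else 0 := by
      intro i
      by_cases h : i = x <;> simp [h]
    rw [Finset.sum_congr rfl fun i _ => step1 i, Finset.sum_ite_eq' (Finset.range (ℓ₁+1)) x _,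
      hdisc]
    by_cases hx : x ∈ Finset.range (ℓ₁+1)
    · rw [if_pos hx, if_pos hx]
      have hx' : x ≤ ℓ₁ := Nat.lt_succ_iff.mp (Finset.mem_range.mp hx)
      have hrow := row x hx'
      have hS0 : (∑ j ∈ Finset.range (ℓ₂+1), n (x, j)) ≠ 0 := by
        intro h0
        rw [h0, mul_zero] at hrow
        exact (Nat.factorial_ne_zero _) hrow.symm
      rw [show (∑ j ∈ Finset.range (ℓ₂+1), w (x, j))
          = ∑ j ∈ Finset.range (ℓ₂+1), (((n (x, j) : ℕ) : ℝ≥0∞) / (((ℓ₁+ℓ₂+1)! : ℕ) : ℝ≥0∞))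
          from rfl, sumw]
      exact frac _ _ hS0 hrow
    · rw [if_neg hx, if_neg hx]
  -- second marginal
  have m2 : π.map (fun x => x.2.1) = discUnif ℓ₂ := by
    apply MeasureTheory.Measure.ext_of_singleton
    intro x
    rw [Measure.map_apply (measurable_snd.fst) (measurableSet_singleton x), hπ_apply]
    simp only [Set.mem_preimage, Set.mem_singleton_iff]
    rw [hG, Finset.sum_product]
    have step1 : ∀ i : ℕ, (∑ j ∈ Finset.range (ℓ₂+1), w (i, j) * (if j = x then 1 else 0))
        = if x ∈ Finset.range (ℓ₂+1) then w (i, x) else 0 := by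
      intro i
      rw [← Finset.sum_ite_eq' (Finset.range (ℓ₂+1)) x (fun j => w (i, j))]
      refine Finset.sum_congr rfl fun j _ => ?_
      by_cases h : j = x <;> simp [h]
    rw [Finset.sum_congr rfl fun i _ => step1 i, hdisc]
    by_cases hx : x ∈ Finset.range (ℓ₂+1)
    · simp only [if_pos hx]
      have hx' : x ≤ ℓ₂ := Nat.lt_succ_iff.mp (Finset.mem_range.mp hx)
      have hcol := col x hx'
      have hS0 : (∑ i ∈ Finset.range (ℓ₁+1), n (i, x)) ≠ 0 := by
        intro h0
        rw [h0, mul_zero] at hcol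
        exact (Nat.factorial_ne_zero _) hcol.symm
      rw [show (∑ i ∈ Finset.range (ℓ₁+1), w (i, x))
          = ∑ i ∈ Finset.range (ℓ₁+1), (((n (i, x) : ℕ) : ℝ≥0∞) / (((ℓ₁+ℓ₂+1)! : ℕ) : ℝ≥0∞))
          from rfl, sumw]
      exact frac _ _ hS0 hcol
    · simp only [if_neg hx, Finset.sum_const_zero]
  -- third marginal
  have m3 : π.map (fun x => x.2.2) = discUnif (ℓ₁ + ℓ₂) := by
    apply MeasureTheory.Measure.ext_of_singleton
    intro x
    rw [Measure.map_apply (measurable_snd.snd) (measurableSet_singleton x), hπ_apply]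
    simp only [Set.mem_preimage, Set.mem_singleton_iff]
    rw [hdisc]
    by_cases hx : x ∈ Finset.range (ℓ₁+ℓ₂+1)
    · rw [if_pos hx]
      have hx' : x ≤ ℓ₁ + ℓ₂ := Nat.lt_succ_iff.mp (Finset.mem_range.mp hx)
      have hcond : ∀ p : ℕ × ℕ, p ∈ G →
          (w p * (if ℓ₁ + ℓ₂ - p.1 - p.2 = x then 1 else 0))
            = ((if p.1 + p.2 = ℓ₁ + ℓ₂ - x then n p else 0 : ℕ) : ℝ≥0∞)
                / (((ℓ₁+ℓ₂+1)! : ℕ) : ℝ≥0∞) := by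
        intro p hp
        rw [hG, Finset.mem_product, Finset.mem_range, Finset.mem_range] at hp
        have hb1 : p.1 ≤ ℓ₁ := Nat.lt_succ_iff.mp hp.1
        have hb2 : p.2 ≤ ℓ₂ := Nat.lt_succ_iff.mp hp.2
        have hiff : (ℓ₁ + ℓ₂ - p.1 - p.2 = x) ↔ (p.1 + p.2 = ℓ₁ + ℓ₂ - x) := by omega
        by_cases h : p.1 + p.2 = ℓ₁ + ℓ₂ - x
        · rw [if_pos (hiff.mpr h), if_pos h, mul_one]
        · rw [if_neg (fun hc => h (hiff.mp hc)), if_neg h, mul_zero, Nat.cast_zero, ENNReal.zero_div]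
      rw [Finset.sum_congr rfl hcond, sumw]
      have hnat : (∑ p ∈ G, if p.1 + p.2 = ℓ₁ + ℓ₂ - x then n p else 0)
          = (ℓ₁+ℓ₂)! := by
        set s := ℓ₁ + ℓ₂ - x with hs
        have hsle : s ≤ ℓ₁ + ℓ₂ := by omega
        have hterm : ∀ p : ℕ × ℕ, p ∈ G →
            (if p.1 + p.2 = s then n p else 0)
              = (if p.1 + p.2 = s then ℓ₁.choose p.1 * ℓ₂.choose p.2 else 0)
                  * ((s)! * (ℓ₁+ℓ₂-s)!) := by
          intro p hp
          by_cases h : p.1 + p.2 = s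
          · rw [if_pos h, if_pos h]
            simp only [hn]
            rw [h, show ℓ₁ + ℓ₂ - p.1 - p.2 = ℓ₁ + ℓ₂ - s from by omega]
            ring
          · rw [if_neg h, if_neg h, zero_mul]
        rw [Finset.sum_congr rfl hterm, ← Finset.sum_mul, hG, vand_grid]
        calc (ℓ₁+ℓ₂).choose s * ((s)! * (ℓ₁+ℓ₂-s)!)
            = (ℓ₁+ℓ₂).choose s * (s)! * (ℓ₁+ℓ₂-s)! := by ring
          _ = (ℓ₁+ℓ₂)! := Nat.choose_mul_factorial_mul_factorial hsle
      rw [hnat]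
      refine frac _ (ℓ₁+ℓ₂+1) (Nat.factorial_ne_zero _) ?_
      exact (Nat.factorial_succ (ℓ₁+ℓ₂)).symm
    · rw [if_neg hx]
      refine Finset.sum_eq_zero fun p hp => ?_
      rw [hG, Finset.mem_product, Finset.mem_range, Finset.mem_range] at hp
      rw [if_neg, mul_zero]
      intro hc
      apply hx
      rw [Finset.mem_range]
      omega
  refine ⟨π, ⟨huniv⟩, m1, m2, m3, ?_⟩
  rw [MeasureTheory.ae_iff, hπ_apply]
  refine Finset.sum_eq_zero fun p hp => ?_
  rw [hG, Finset.mem_product, Finset.mem_range, Finset.mem_range] at hp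
  have hb1 : p.1 ≤ ℓ₁ := Nat.lt_succ_iff.mp hp.1
  have hb2 : p.2 ≤ ℓ₂ := Nat.lt_succ_iff.mp hp.2
  rw [if_neg, mul_zero]
  simp only [Set.mem_setOf_eq, not_not]
  omega
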